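/- Let q ∈ (0,1), π ∈ [0,1], x ∈ [0,1] with xπ < 1, let p : ℕ → [0,∞) satisfy ∑_{s} s p_s < ∞, and let α : ℕ → [0,1]. Then (1 − xπ) · ∑_{s=0}^{∞} (s+1) p_{s+1} (1 − α_{s+1}) · ( ∑_{j=0}^{s} 1[ j ≤ q(s+1) ] b_{s,j}(xπ) ) = ∑_{s=1}^{∞} (1 − α_s) p_s ∑_{j = s − ⌊qs⌋}^{s} j · b_{s,j}(1 − xπ), both series converging absolutely. -/
import Mathlib


/-- Binomial probability `b_{s,r}(p) = (s choose r) p^r (1-p)^(s-r)`. -/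
noncomputable def binomProb (s r : ℕ) (p : ℝ) : ℝ :=
  (s.choose r : ℝ) * p ^ r * (1 - p) ^ (s - r)

lemma binomProb_nonneg {p : ℝ} (h0 : 0 ≤ p) (h1 : p ≤ 1) (s r : ℕ) :
    0 ≤ binomProb s r p := by
  have : 0 ≤ 1 - p := by linarith
  unfold binomProb
  positivity

lemma sum_binomProb (s : ℕ) (p : ℝ) :
    ∑ j ∈ Finset.range (s + 1), binomProb s j p = 1 := by
  calc ∑ j ∈ Finset.range (s + 1), binomProb s j p
      = ∑ j ∈ Finset.range (s + 1), p ^ j * (1 - p) ^ (s - j) * (s.choose j : ℝ) :=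
        Finset.sum_congr rfl fun j _ => by unfold binomProb; ring
    _ = (p + (1 - p)) ^ s := (add_pow p (1 - p) s).symm
    _ = 1 := by norm_num

lemma key_identity (θ : ℝ) (t j : ℕ) (hj : j ≤ t) :
    ((t : ℝ) + 1) * (1 - θ) * binomProb t j θ
      = ((t + 1 - j : ℕ) : ℝ) * binomProb (t + 1) (t + 1 - j) (1 - θ) := by
  unfold binomProb
  have h1 : t + 1 - (t + 1 - j) = j := by omega
  have h2 : t + 1 - j = (t - j) + 1 := by omega
  have hc : ((t + 1) * Nat.choose t j : ℕ) =
      ((Nat.choose (t + 1) ((t - j) + 1)) * ((t - j) + 1) : ℕ) := by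
    have h3 := Nat.add_one_mul_choose_eq t (t - j)
    rw [Nat.choose_symm hj] at h3
    simpa [Nat.succ_eq_add_one] using h3
  have hcr : ((t : ℝ) + 1) * (Nat.choose t j : ℝ) =
      (Nat.choose (t + 1) ((t - j) + 1) : ℝ) * (((t - j) + 1 : ℕ) : ℝ) := by
    exact_mod_cast congrArg (Nat.cast : ℕ → ℝ) hc
  rw [sub_sub_cancel, h1, h2, pow_succ]
  push_cast at hcr ⊢
  linear_combination ((1 - θ) ^ (t - j) * (1 - θ) * θ ^ j) * hcr

lemma termwise (q θ : ℝ) (hq0 : 0 < q) (hq1 : q < 1) (t : ℕ) :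
    ∑ j ∈ Finset.Icc ((t + 1) - Nat.floor (q * ((t : ℝ) + 1))) (t + 1),
        (j : ℝ) * binomProb (t + 1) j (1 - θ)
      = ((t : ℝ) + 1) * (1 - θ) *
        ∑ j ∈ Finset.range (t + 1),
          (if (j : ℝ) ≤ q * ((t : ℝ) + 1) then binomProb t j θ else 0) := by
  have ht0 : (0:ℝ) ≤ (t : ℝ) + 1 := by positivity
  have hr0 : (0:ℝ) ≤ q * ((t : ℝ) + 1) := by positivity
  set m := Nat.floor (q * ((t : ℝ) + 1)) with hm
  have hmt : m ≤ t := by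
    have hlt : q * ((t : ℝ) + 1) < ((t + 1 : ℕ) : ℝ) := by
      push_cast; nlinarith [Nat.cast_nonneg (α := ℝ) t]
    have := (Nat.floor_lt hr0).mpr hlt
    omega
  have hcond : ∀ j : ℕ, ((j : ℝ) ≤ q * ((t : ℝ) + 1)) ↔ j ≤ m :=
    fun j => (Nat.le_floor_iff hr0).symm
  have hfilter : (Finset.range (t + 1)).filter (fun j => j ≤ m) = Finset.range (m + 1) := by
    ext j
    simp only [Finset.mem_filter, Finset.mem_range, Nat.lt_succ_iff]
    omega
  have hsum1 : ∑ j ∈ Finset.range (t + 1),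
      (if (j : ℝ) ≤ q * ((t : ℝ) + 1) then binomProb t j θ else 0)
      = ∑ j ∈ Finset.range (m + 1), binomProb t j θ := by
    rw [show (∑ j ∈ Finset.range (t + 1),
        (if (j : ℝ) ≤ q * ((t : ℝ) + 1) then binomProb t j θ else 0))
        = ∑ j ∈ Finset.range (t + 1), (if j ≤ m then binomProb t j θ else 0) from
      Finset.sum_congr rfl fun j _ => if_congr (hcond j) rfl rfl]
    rw [Finset.sum_ite, Finset.sum_const_zero, add_zero, hfilter]
  rw [hsum1, Finset.mul_sum]
  symm
  apply Finset.sum_nbij' (i := fun j => t + 1 - j) (j := fun j => t + 1 - j)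
  · intro a ha
    simp only [Finset.mem_range, Nat.lt_succ_iff] at ha
    simp only [Finset.mem_Icc]
    omega
  · intro a ha
    simp only [Finset.mem_Icc] at ha
    simp only [Finset.mem_range, Nat.lt_succ_iff]
    omega
  · intro a ha
    simp only [Finset.mem_range, Nat.lt_succ_iff] at ha
    omega
  · intro a ha
    simp only [Finset.mem_Icc] at ha
    omega
  · intro a ha
    simp only [Finset.mem_range, Nat.lt_succ_iff] at ha
    exact key_identity θ t a (le_trans ha hmt)

theorem stmt11 (q : ℝ) (hq : q ∈ Set.Ioo (0:ℝ) 1)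
    (π x : ℝ) (hπ : π ∈ Set.Icc (0:ℝ) 1) (hx : x ∈ Set.Icc (0:ℝ) 1) (hxπ : x * π < 1)
    (p : ℕ → ℝ) (hp : ∀ s, 0 ≤ p s) (hsum : Summable fun s : ℕ => (s : ℝ) * p s)
    (α : ℕ → ℝ) (hα : ∀ s, α s ∈ Set.Icc (0:ℝ) 1) :
    Summable (fun s : ℕ => ((s : ℝ) + 1) * p (s + 1) * (1 - α (s + 1)) *
      ∑ j ∈ Finset.range (s + 1),
        (if (j : ℝ) ≤ q * ((s : ℝ) + 1) then binomProb s j (x * π) else 0)) ∧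
    Summable (fun s : ℕ => (1 - α s) * p s *
      ∑ j ∈ Finset.Icc (s - Nat.floor (q * (s : ℝ))) s, (j : ℝ) * binomProb s j (1 - x * π)) ∧
    (1 - x * π) * (∑' s : ℕ, ((s : ℝ) + 1) * p (s + 1) * (1 - α (s + 1)) *
        ∑ j ∈ Finset.range (s + 1),
          (if (j : ℝ) ≤ q * ((s : ℝ) + 1) then binomProb s j (x * π) else 0)) =
      ∑' s : ℕ, (1 - α s) * p s *
        ∑ j ∈ Finset.Icc (s - Nat.floor (q * (s : ℝ))) s, (j : ℝ) * binomProb s j (1 - x * π) := by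
  obtain ⟨hq0, hq1⟩ := hq
  obtain ⟨hπ0, hπ1⟩ := hπ
  obtain ⟨hx0, hx1⟩ := hx
  set θ := x * π with hθ
  have hθ0 : 0 ≤ θ := mul_nonneg hx0 hπ0
  have hθ1 : θ ≤ 1 := le_of_lt hxπ
  set f : ℕ → ℝ := fun s => ((s : ℝ) + 1) * p (s + 1) * (1 - α (s + 1)) *
      ∑ j ∈ Finset.range (s + 1),
        (if (j : ℝ) ≤ q * ((s : ℝ) + 1) then binomProb s j θ else 0) with hf
  set g : ℕ → ℝ := fun s => (1 - α s) * p s *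
      ∑ j ∈ Finset.Icc (s - Nat.floor (q * (s : ℝ))) s, (j : ℝ) * binomProb s j (1 - θ) with hg
  have hinnerL_nonneg : ∀ s : ℕ, 0 ≤ ∑ j ∈ Finset.range (s + 1),
      (if (j : ℝ) ≤ q * ((s : ℝ) + 1) then binomProb s j θ else 0) := by
    intro s
    apply Finset.sum_nonneg
    intro j hj
    split
    · exact binomProb_nonneg hθ0 hθ1 s j
    · exact le_refl 0
  have hinnerL_le : ∀ s : ℕ, (∑ j ∈ Finset.range (s + 1),
      (if (j : ℝ) ≤ q * ((s : ℝ) + 1) then binomProb s j θ else 0)) ≤ 1 := by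
    intro s
    calc (∑ j ∈ Finset.range (s + 1),
        (if (j : ℝ) ≤ q * ((s : ℝ) + 1) then binomProb s j θ else 0))
        ≤ ∑ j ∈ Finset.range (s + 1), binomProb s j θ := by
          apply Finset.sum_le_sum
          intro j hj
          split
          · exact le_refl _
          · exact binomProb_nonneg hθ0 hθ1 s j
      _ = 1 := sum_binomProb s θ
  have hSf : Summable f := by
    have hmaj : Summable (fun s : ℕ => ((s : ℝ) + 1) * p (s + 1)) := by
      have := (summable_nat_add_iff 1).mpr hsum
      simpa using this
    apply Summable.of_nonneg_of_le _ _ hmaj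
    · intro s
      apply mul_nonneg
      apply mul_nonneg
      apply mul_nonneg
      · positivity
      · exact hp _
      · linarith [(hα (s+1)).2]
      · exact hinnerL_nonneg s
    · intro s
      have h1 : (1 - α (s+1)) ≤ 1 := by linarith [(hα (s+1)).1]
      have h2 : 0 ≤ ((s:ℝ)+1) * p (s+1) := mul_nonneg (by positivity) (hp _)
      calc f s ≤ ((s : ℝ) + 1) * p (s + 1) * (1 - α (s + 1)) * 1 := by
            apply mul_le_mul_of_nonneg_left (hinnerL_le s)
            apply mul_nonneg h2
            linarith [(hα (s+1)).2]
        _ ≤ ((s : ℝ) + 1) * p (s + 1) := by nlinarith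
  have hg0 : g 0 = 0 := by
    simp [hg]
  have hgsucc : ∀ s : ℕ, g (s + 1) = (1 - θ) * f s := by
    intro s
    have ht := termwise q θ hq0 hq1 s
    simp only [hg, hf]
    rw [show ((s + 1 : ℕ) : ℝ) = (s : ℝ) + 1 by push_cast; ring, ht]
    ring
  have hSg : Summable g := by
    apply (summable_nat_add_iff 1).mp
    simp only [hgsucc]
    exact hSf.mul_left (1 - θ)
  refine ⟨hSf, hSg, ?_⟩
  rw [Summable.tsum_eq_zero_add hSg, hg0]
  simp only [hgsucc]
  rw [tsum_mul_left, zero_add]
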